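/- Let A = {A_n : n ≥ 2} with A_n = conv(S_{1/n} ∪ I_n) ⊂ ℝ^{d+1}, where S_{1/n} is the simplex from Lemma lem:simplex embedded in the last d coordinates and I_n = {t·e_1 : t ≥ n}. Let B be any family of bounded convex sets each containing the unit cube [0,1]^d embedded in the last d coordinates. Then the family F = A ∪ B satisfies the (d+1+2k, d+1+k)-property for every k ≥ 0. -/

import Mathlib

open Bornology

/-- In `ℝ^{d+1}`, the `k`-th vertex (`k : Fin d`) of the simplex `S_α` sitting in the
last `d` coordinates: `e_2 + ⋯ + e_{k+1} + α·e_{k+2}` (1-based), i.e. coordinate `i`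
is `1` for `1 ≤ i ≤ k`, `α` for `i = k+1`, and `0` otherwise. -/
noncomputable def embVertex (d : ℕ) (α : ℝ) (k : Fin d) : Fin (d + 1) → ℝ :=
  fun i => if 1 ≤ i.val ∧ i.val ≤ k.val then 1
    else if i.val = k.val + 1 then α else 0

/-- The simplex `S_α ⊆ ℝ^{d+1}` embedded in the last `d` coordinates. -/
noncomputable def embSimplex (d : ℕ) (α : ℝ) : Set (Fin (d + 1) → ℝ) :=
  convexHull ℝ (Set.range (embVertex d α))

/-- The ray `I_n = {t·e₁ : t ≥ n}` in `ℝ^{d+1}`. -/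
noncomputable def rayI (d : ℕ) (n : ℕ) : Set (Fin (d + 1) → ℝ) :=
  {x | ∃ t : ℝ, (n : ℝ) ≤ t ∧ x = t • (Pi.single (0 : Fin (d + 1)) (1:ℝ) : Fin (d+1) → ℝ)}

/-- `A_n = conv(S_{1/n} ∪ I_n) ⊆ ℝ^{d+1}`. -/
noncomputable def ASet (d : ℕ) (n : ℕ) : Set (Fin (d + 1) → ℝ) :=
  convexHull ℝ (embSimplex d (1 / n) ∪ rayI d n)

/-- The unit cube `[0,1]^d` embedded in the last `d` coordinates of `ℝ^{d+1}`. -/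
def embCube (d : ℕ) : Set (Fin (d + 1) → ℝ) :=
  {x | x 0 = 0 ∧ ∀ i : Fin (d + 1), i ≠ 0 → x i ∈ Set.Icc (0:ℝ) 1}

noncomputable def chainF : List ℝ → ℕ → ℝ
  | [], i => if i = 0 then 1 else 0
  | a :: l, i => (1 - a) * chainF l i + a * chainF l (i - 1)

lemma chainF_zero (l : List ℝ) : chainF l 0 = 1 := by
  induction l with
  | nil => simp [chainF]
  | cons a l ih => simp [chainF, ih]

lemma chainF_nonneg {l : List ℝ} (hl : ∀ a ∈ l, 0 ≤ a ∧ a ≤ 1) (i : ℕ) :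
    0 ≤ chainF l i := by
  induction l generalizing i with
  | nil => simp [chainF]; positivity
  | cons a l ih =>
    obtain ⟨ha0, ha1⟩ := hl a (by simp)
    have h' : ∀ b ∈ l, 0 ≤ b ∧ b ≤ 1 := fun b hb => hl b (by simp [hb])
    have := ih h' i
    have := ih h' (i - 1)
    simp only [chainF]
    nlinarith

lemma chainF_le_one {l : List ℝ} (hl : ∀ a ∈ l, 0 ≤ a ∧ a ≤ 1) (i : ℕ) :
    chainF l i ≤ 1 := by
  induction l generalizing i with
  | nil => simp [chainF]; split <;> norm_num
  | cons a l ih =>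
    obtain ⟨ha0, ha1⟩ := hl a (by simp)
    have h' : ∀ b ∈ l, 0 ≤ b ∧ b ≤ 1 := fun b hb => hl b (by simp [hb])
    have := ih h' i
    have := ih h' (i - 1)
    simp only [chainF]
    nlinarith

lemma chainF_anti {l : List ℝ} (hl : ∀ a ∈ l, 0 ≤ a ∧ a ≤ 1) (i : ℕ) :
    chainF l (i + 1) ≤ chainF l i := by
  induction l generalizing i with
  | nil =>
    simp only [chainF]
    split <;> [omega; split <;> norm_num]
  | cons a l ih =>
    obtain ⟨ha0, ha1⟩ := hl a (by simp)
    have h' : ∀ b ∈ l, 0 ≤ b ∧ b ≤ 1 := fun b hb => hl b (by simp [hb])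
    have h1 : chainF l (i + 1) ≤ chainF l i := ih h' i
    have h2 : chainF l i ≤ chainF l (i - 1) := by
      cases i with
      | zero => simp
      | succ j => simpa using ih h' j
    simp only [chainF, Nat.add_sub_cancel]
    nlinarith

lemma chainF_eq_zero {l : List ℝ} {i : ℕ} (h : l.length < i) : chainF l i = 0 := by
  induction l generalizing i with
  | nil => simp at h; simp [chainF]; omega
  | cons a l ih =>
    simp only [List.length_cons] at h
    have h1 : l.length < i := by omega
    have h2 : l.length < i - 1 := by omega
    simp [chainF, ih h1, ih h2]

lemma chainF_perm {l l' : List ℝ} (h : l.Perm l') : chainF l = chainF l' := by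
  induction h with
  | nil => rfl
  | cons a _ ih => funext i; simp [chainF, ih]
  | swap a b l =>
    funext i
    simp only [chainF]
    have : i - 1 - 1 = i - 2 := by omega
    rw [this]
    ring
  | trans _ _ ih1 ih2 => rw [ih1, ih2]

noncomputable def chainPt (d : ℕ) (l : List ℝ) : Fin (d + 1) → ℝ :=
  fun i => if i.val = 0 then 0 else chainF l i.val

lemma chainPt_mem_cube {d : ℕ} {l : List ℝ} (hl : ∀ a ∈ l, 0 ≤ a ∧ a ≤ 1) :
    chainPt d l ∈ embCube d := by
  constructor
  · simp [chainPt]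
  · intro i hi
    have h0 : i.val ≠ 0 := fun h => hi (Fin.ext h)
    rw [Set.mem_Icc]
    simp only [chainPt, if_neg h0]
    exact ⟨chainF_nonneg hl _, chainF_le_one hl _⟩

lemma sum_Ico_telescope (f : ℕ → ℝ) {m n : ℕ} (h : m ≤ n) :
    ∑ k ∈ Finset.Ico m n, (f k - f (k + 1)) = f m - f n := by
  rw [Finset.sum_Ico_eq_sub _ h, Finset.sum_range_sub' f, Finset.sum_range_sub' f]
  ring

lemma chainPt_mem_simplex {d : ℕ} (a : ℝ) (l : List ℝ)
    (hl : ∀ b ∈ l, 0 ≤ b ∧ b ≤ 1) (hlen : l.length < d) :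
    chainPt d (a :: l) ∈ embSimplex d a := by
  set w : Fin d → ℝ := fun k => chainF l k.val - chainF l (k.val + 1) with hw
  have hsum : ∑ k ∈ Finset.univ, w k = 1 := by
    rw [hw]
    rw [Fin.sum_univ_eq_sum_range (fun k => chainF l k - chainF l (k + 1))]
    rw [Finset.sum_range_sub' (fun k => chainF l k)]
    rw [chainF_zero, chainF_eq_zero hlen]
    ring
  have key : Finset.univ.centerMass w (embVertex d a) = chainPt d (a :: l) := by
    rw [Finset.centerMass_eq_of_sum_1 _ _ hsum]
    funext i
    rw [Finset.sum_apply]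
    simp only [Pi.smul_apply, smul_eq_mul]
    by_cases hi : i.val = 0
    · have hv : ∀ k : Fin d, embVertex d a k i = 0 := by
        intro k
        simp only [embVertex, hi]
        rw [if_neg (by omega), if_neg (by omega)]
      simp only [hv, mul_zero, Finset.sum_const_zero]
      simp [chainPt, hi]
    · obtain ⟨j, hj⟩ : ∃ j, i.val = j + 1 := ⟨i.val - 1, by omega⟩
      have hjd : j < d := by have := i.isLt; omega
      have hv : ∀ k : Fin d,
          embVertex d a k i = (if j + 1 ≤ k.val then 1 else if k.val = j then a else 0) := by
        intro k
        simp only [embVertex, hj]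
        by_cases h1 : j + 1 ≤ k.val
        · rw [if_pos ⟨by omega, by omega⟩, if_pos h1]
        · rw [if_neg (by omega), if_neg h1]
          by_cases h2 : k.val = j
          · rw [if_pos (by omega), if_pos h2]
          · rw [if_neg (by omega), if_neg h2]
      simp only [hv, hw]
      rw [Fin.sum_univ_eq_sum_range
        (fun k => (chainF l k - chainF l (k + 1)) * (if j + 1 ≤ k then 1 else if k = j then a else 0))]
      rw [Finset.range_eq_Ico, ← Finset.sum_Ico_consecutive _ (Nat.zero_le (j + 1)) (by omega : j + 1 ≤ d)]
      have e1 : ∑ k ∈ Finset.Ico 0 (j + 1),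
          (chainF l k - chainF l (k + 1)) * (if j + 1 ≤ k then 1 else if k = j then a else 0)
          = ∑ k ∈ Finset.Ico 0 (j + 1), (if k = j then (chainF l j - chainF l (j + 1)) * a else 0) := by
        apply Finset.sum_congr rfl
        intro k hk
        rw [Finset.mem_Ico] at hk
        rw [if_neg (by omega)]
        by_cases h2 : k = j
        · subst h2; rw [if_pos rfl, if_pos rfl]
        · rw [if_neg h2, if_neg h2, mul_zero]
      have e2 : ∑ k ∈ Finset.Ico (j + 1) d,
          (chainF l k - chainF l (k + 1)) * (if j + 1 ≤ k then 1 else if k = j then a else 0)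
          = chainF l (j + 1) := by
        have : ∀ k ∈ Finset.Ico (j + 1) d,
            (chainF l k - chainF l (k + 1)) * (if j + 1 ≤ k then 1 else if k = j then a else 0)
            = chainF l k - chainF l (k + 1) := by
          intro k hk
          rw [Finset.mem_Ico] at hk
          rw [if_pos hk.1, mul_one]
        rw [Finset.sum_congr rfl this, sum_Ico_telescope _ (by omega : j + 1 ≤ d),
          chainF_eq_zero hlen, sub_zero]
      rw [e1, e2, Finset.sum_ite_eq' (Finset.Ico 0 (j + 1)) j,
        if_pos (by rw [Finset.mem_Ico]; omega)]
      simp only [chainPt, hj, if_neg (Nat.succ_ne_zero j), chainF, Nat.add_sub_cancel]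
      ring
  rw [embSimplex, ← key]
  exact Finset.centerMass_mem_convexHull _
    (fun k _ => sub_nonneg.2 (chainF_anti hl _)) (by rw [hsum]; norm_num)
    (fun k _ => Set.mem_range_self k)

lemma chainPt_perm {d : ℕ} {l l' : List ℝ} (h : l.Perm l') : chainPt d l = chainPt d l' := by
  unfold chainPt; rw [chainF_perm h]

lemma zero_mem_embCube (d : ℕ) : (0 : Fin (d + 1) → ℝ) ∈ embCube d :=
  ⟨rfl, fun i _ => by simp⟩

lemma ray_mem_ASet {d n N : ℕ} (h : n ≤ N) :
    ((N : ℝ) • (Pi.single (0 : Fin (d + 1)) (1 : ℝ) : Fin (d + 1) → ℝ)) ∈ ASet d n :=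
  subset_convexHull ℝ _ (Or.inr ⟨N, by exact_mod_cast h, rfl⟩)

lemma simplex_subset_ASet (d n : ℕ) : embSimplex d (1 / n) ⊆ ASet d n :=
  fun _ hx => subset_convexHull ℝ _ (Or.inl hx)

/-- The family `F = A ∪ B`, where `A = {A_n : n ≥ 2}` and `B` is any family of bounded
convex sets each containing the unit cube, satisfies the `(d+1+2k, d+1+k)`-property for
every `k ≥ 0`: among any `d+1+2k` of its members there are `d+1+k` with a common point. -/
theorem family_satisfies_pq_property (d : ℕ) {β : Type*} (B : β → Set (Fin (d + 1) → ℝ))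
    (hBbdd : ∀ b, IsBounded (B b)) (hBconv : ∀ b, Convex ℝ (B b))
    (hBcube : ∀ b, embCube d ⊆ B b) :
    ∀ k : ℕ, ∀ I : Finset (ℕ ⊕ β), I.card = d + 1 + 2 * k →
      ∃ J ⊆ I, J.card = d + 1 + k ∧
        (⋂ i ∈ J, Sum.elim (fun n : ℕ => ASet d (n + 2)) B i).Nonempty := by

  classical
  intro k I hI
  have hab : I.toLeft.card + I.toRight.card = d + 1 + 2 * k := by
    rw [Finset.card_toLeft_add_card_toRight, hI]
  by_cases h1 : d + 1 + k ≤ I.toRight.card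
  · -- enough B-sets: take d+1+k of them, common point 0
    obtain ⟨T, hTsub, hTcard⟩ := Finset.exists_subset_card_eq h1
    refine ⟨T.map ⟨Sum.inr, Sum.inr_injective⟩, ?_, ?_, ⟨0, ?_⟩⟩
    · intro x hx
      rw [Finset.mem_map] at hx
      obtain ⟨b, hb, rfl⟩ := hx
      exact Finset.mem_toRight.1 (hTsub hb)
    · rw [Finset.card_map, hTcard]
    · rw [Set.mem_iInter₂]
      intro i hi
      rw [Finset.mem_map] at hi
      obtain ⟨b, hb, rfl⟩ := hi
      exact hBcube b (zero_mem_embCube d)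
  · by_cases h2 : I.toRight.card ≤ k
    · -- enough A-sets: take d+1+k of them, common point far on the ray
      have hA : d + 1 + k ≤ I.toLeft.card := by omega
      obtain ⟨T, hTsub, hTcard⟩ := Finset.exists_subset_card_eq hA
      have hTne : T.Nonempty := by rw [← Finset.card_pos, hTcard]; omega
      refine ⟨T.map ⟨Sum.inl, Sum.inl_injective⟩, ?_, ?_,
        ⟨((T.max' hTne + 2 : ℕ) : ℝ) • (Pi.single (0 : Fin (d+1)) (1:ℝ) : Fin (d+1) → ℝ), ?_⟩⟩
      · intro x hx
        rw [Finset.mem_map] at hx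
        obtain ⟨n, hn, rfl⟩ := hx
        exact Finset.mem_toLeft.1 (hTsub hn)
      · rw [Finset.card_map, hTcard]
      · rw [Set.mem_iInter₂]
        intro i hi
        rw [Finset.mem_map] at hi
        obtain ⟨n, hn, rfl⟩ := hi
        exact ray_mem_ASet (by have := Finset.le_max' T n hn; omega)
    · -- mixed case
      push_neg at h1 h2
      obtain ⟨S, hSsub, hScard⟩ :=
        Finset.exists_subset_card_eq (s := I.toLeft) (n := d + 1 + k - I.toRight.card) (by omega)
      set f : ℕ → ℝ := fun n => 1 / ((n : ℝ) + 2) with hf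
      set l : List ℝ := S.toList.map f with hlist
      have hlmem : ∀ x ∈ l, 0 ≤ x ∧ x ≤ 1 := by
        intro x hx
        rw [hlist, List.mem_map] at hx
        obtain ⟨n, _, rfl⟩ := hx
        have hn2 : (0 : ℝ) < (n : ℝ) + 2 := by positivity
        constructor
        · positivity
        · rw [hf]; rw [div_le_one hn2]; have : (0:ℝ) ≤ (n:ℝ) := Nat.cast_nonneg n; linarith
      refine ⟨S.map ⟨Sum.inl, Sum.inl_injective⟩ ∪ I.toRight.map ⟨Sum.inr, Sum.inr_injective⟩,
        ?_, ?_, ⟨chainPt d l, ?_⟩⟩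
      · apply Finset.union_subset
        · intro x hx
          rw [Finset.mem_map] at hx
          obtain ⟨n, hn, rfl⟩ := hx
          exact Finset.mem_toLeft.1 (hSsub hn)
        · intro x hx
          rw [Finset.mem_map] at hx
          obtain ⟨b, hb, rfl⟩ := hx
          exact Finset.mem_toRight.1 hb
      · rw [Finset.card_union_of_disjoint, Finset.card_map, Finset.card_map, hScard]
        · omega
        · rw [Finset.disjoint_left]
          rintro x hx hx'
          rw [Finset.mem_map] at hx hx'
          obtain ⟨n, _, rfl⟩ := hx
          obtain ⟨b, _, h⟩ := hx'
          exact Sum.inl_ne_inr h.symm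
      · rw [Set.mem_iInter₂]
        intro i hi
        rw [Finset.mem_union] at hi
        rcases hi with hi | hi
        · rw [Finset.mem_map] at hi
          obtain ⟨n, hn, rfl⟩ := hi
          apply simplex_subset_ASet d (n + 2)
          have hperm : l.Perm (f n :: (S.erase n).toList.map f) := by
            have hp : S.toList.Perm (n :: (S.erase n).toList) := by
              conv_lhs => rw [← Finset.insert_erase hn]
              exact Finset.toList_insert (Finset.notMem_erase n S)
            rw [hlist]
            simpa using hp.map f
          rw [chainPt_perm hperm]
          have hcast : (1 : ℝ) / ((((n : ℕ) + 2 : ℕ)) : ℝ) = f n := by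
            rw [hf]; push_cast; ring
          rw [hcast]
          apply chainPt_mem_simplex
          · intro b hb
            apply hlmem
            rw [hlist]
            exact (hperm.mem_iff).2 (List.mem_cons_of_mem _ hb)
          · rw [List.length_map, Finset.length_toList, Finset.card_erase_of_mem hn, hScard]
            omega
        · rw [Finset.mem_map] at hi
          obtain ⟨b, hb, rfl⟩ := hi
          exact hBcube b (chainPt_mem_cube hlmem)
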